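/- Let N ≥ M ≥ 1 and let (u_i)_{i=1}^N be an equiangular tight unit-norm frame for ℝ^M. Then (u_i) is a Grassmannian frame: for every unit-norm frame (e_i)_{i=1}^N for ℝ^M, one has max_{1 ≤ i < j ≤ N} |⟨u_i, u_j⟩| ≤ max_{1 ≤ i < j ≤ N} |⟨e_i, e_j⟩|. -/

import Mathlib

open scoped InnerProductSpace

open Finset in
private lemma grass_swap4 {M N : ℕ} (f : Fin N → Fin N → Fin M → Fin M → ℝ) :
    ∑ i, ∑ j, ∑ k, ∑ l, f i j k l = ∑ k, ∑ l, ∑ i, ∑ j, f i j k l := by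
  calc ∑ i, ∑ j, ∑ k, ∑ l, f i j k l
      = ∑ i, ∑ k, ∑ j, ∑ l, f i j k l :=
        Finset.sum_congr rfl fun i _ => Finset.sum_comm
    _ = ∑ k, ∑ i, ∑ j, ∑ l, f i j k l := Finset.sum_comm
    _ = ∑ k, ∑ i, ∑ l, ∑ j, f i j k l :=
        Finset.sum_congr rfl fun k _ => Finset.sum_congr rfl fun i _ => Finset.sum_comm
    _ = ∑ k, ∑ l, ∑ i, ∑ j, f i j k l :=
        Finset.sum_congr rfl fun k _ => Finset.sum_comm

private lemma grass_inner_eq {M N : ℕ} (e : Fin N → EuclideanSpace ℝ (Fin M)) (i j : Fin N) :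
    (⟪e i, e j⟫_ℝ) = ∑ k, e i k * e j k := by
  simp [PiLp.inner_apply, RCLike.inner_apply, mul_comm]

private lemma grass_sum4 {M N : ℕ} (e : Fin N → EuclideanSpace ℝ (Fin M)) :
    ∑ i, ∑ j, (⟪e i, e j⟫_ℝ)^2 = ∑ k, ∑ l, (∑ i, e i k * e i l)^2 := by
  calc ∑ i, ∑ j, (⟪e i, e j⟫_ℝ)^2
      = ∑ i, ∑ j, ∑ k, ∑ l, (e i k * e i l) * (e j k * e j l) := by
        refine Finset.sum_congr rfl fun i _ => Finset.sum_congr rfl fun j _ => ?_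
        rw [grass_inner_eq, sq, Finset.sum_mul_sum]
        exact Finset.sum_congr rfl fun k _ => Finset.sum_congr rfl fun l _ => by ring
    _ = ∑ k, ∑ l, ∑ i, ∑ j, (e i k * e i l) * (e j k * e j l) := grass_swap4 _
    _ = ∑ k, ∑ l, (∑ i, e i k * e i l)^2 := by
        refine Finset.sum_congr rfl fun k _ => Finset.sum_congr rfl fun l _ => ?_
        rw [sq, Finset.sum_mul_sum]

/-- Welch lower bound for the full Gram sum of a unit-norm family. -/
private lemma grass_welch {M N : ℕ} (e : Fin N → EuclideanSpace ℝ (Fin M))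
    (he : ∀ i, ‖e i‖ = 1) :
    (N:ℝ)^2 ≤ (M:ℝ) * ∑ i, ∑ j, (⟪e i, e j⟫_ℝ)^2 := by
  have hnorm : ∀ i, ∑ k, e i k * e i k = 1 := by
    intro i
    rw [← grass_inner_eq, real_inner_self_eq_norm_sq, he i, one_pow]
  have htr : ∑ k, ∑ i : Fin N, e i k * e i k = (N:ℝ) := by
    rw [Finset.sum_comm]
    simp [hnorm]
  have hCS : ((N:ℝ))^2 ≤ (M:ℝ) * ∑ k, (∑ i, e i k * e i k)^2 := by
    have := Finset.sum_mul_sq_le_sq_mul_sq Finset.univ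
      (fun _ : Fin M => (1:ℝ)) (fun k => ∑ i, e i k * e i k)
    simpa [htr] using this
  refine hCS.trans ?_
  rw [grass_sum4]
  have : ∑ k, (∑ i, e i k * e i k)^2 ≤ ∑ k, ∑ l, (∑ i, e i k * e i l)^2 := by
    refine Finset.sum_le_sum fun k _ => ?_
    exact Finset.single_le_sum (f := fun l => (∑ i, e i k * e i l)^2)
      (fun l _ => sq_nonneg _) (Finset.mem_univ k)
  exact mul_le_mul_of_nonneg_left this (Nat.cast_nonneg M)

private lemma grass_tight_row {M N : ℕ} (u : Fin N → EuclideanSpace ℝ (Fin M))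
    (hunorm : ∀ i, ‖u i‖ = 1)
    (A : ℝ) (hA : ∀ x : EuclideanSpace ℝ (Fin M),
      (∑ i : Fin N, ⟪x, u i⟫_ℝ • u i) = A • x) (j : Fin N) :
    ∑ i, (⟪u j, u i⟫_ℝ)^2 = A := by
  have h := congrArg (fun v : EuclideanSpace ℝ (Fin M) => ⟪v, u j⟫_ℝ) (hA (u j))
  simp only [sum_inner, real_inner_smul_left] at h
  have hj : ⟪u j, u j⟫_ℝ = 1 := by
    rw [real_inner_self_eq_norm_sq, hunorm j, one_pow]
  rw [hj, mul_one] at h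
  rw [← h]
  exact Finset.sum_congr rfl fun i _ => by rw [sq, real_inner_comm (u i) (u j)]

private lemma grass_tight_col {M N : ℕ} (u : Fin N → EuclideanSpace ℝ (Fin M))
    (A : ℝ) (hA : ∀ x : EuclideanSpace ℝ (Fin M),
      (∑ i : Fin N, ⟪x, u i⟫_ℝ • u i) = A • x) (k : Fin M) :
    ∑ i, (u i k)^2 = A := by
  have h := congrArg (fun v : EuclideanSpace ℝ (Fin M) =>
    ⟪v, EuclideanSpace.single k (1:ℝ)⟫_ℝ) (hA (EuclideanSpace.single k (1:ℝ)))
  simp only [sum_inner, real_inner_smul_left, EuclideanSpace.inner_single_left,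
    EuclideanSpace.inner_single_right, EuclideanSpace.single_apply] at h
  simpa [sq] using h

private lemma grass_tight_total {M N : ℕ} (u : Fin N → EuclideanSpace ℝ (Fin M))
    (hunorm : ∀ i, ‖u i‖ = 1)
    (A : ℝ) (hA : ∀ x : EuclideanSpace ℝ (Fin M),
      (∑ i : Fin N, ⟪x, u i⟫_ℝ • u i) = A • x) :
    (M:ℝ) * ∑ i, ∑ j, (⟪u i, u j⟫_ℝ)^2 = (N:ℝ)^2 := by
  have hMA : (M:ℝ) * A = (N:ℝ) := by
    have h1 : ∑ k : Fin M, ∑ i : Fin N, (u i k)^2 = (M:ℝ) * A := by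
      rw [Finset.sum_congr rfl (fun k _ => grass_tight_col u A hA k)]
      simp [mul_comm]
    have h2 : ∑ k : Fin M, ∑ i : Fin N, (u i k)^2 = (N:ℝ) := by
      rw [Finset.sum_comm]
      have : ∀ i, ∑ k, (u i k)^2 = 1 := by
        intro i
        have := grass_inner_eq u i i
        rw [real_inner_self_eq_norm_sq, hunorm i, one_pow] at this
        simpa [sq] using this.symm
      simp [this]
    rw [← h1, h2]
  have hsum : ∑ i, ∑ j, (⟪u i, u j⟫_ℝ)^2 = (N:ℝ) * A := by
    rw [Finset.sum_congr rfl (fun i _ => grass_tight_row u hunorm A hA i)]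
    simp [mul_comm]
  rw [hsum, sq]
  calc (M:ℝ) * ((N:ℝ) * A) = (N:ℝ) * ((M:ℝ) * A) := by ring
    _ = (N:ℝ) * (N:ℝ) := by rw [hMA]

private lemma grass_split {M N : ℕ} (e : Fin N → EuclideanSpace ℝ (Fin M))
    (he : ∀ i, ‖e i‖ = 1) :
    ∑ i, ∑ j, (⟪e i, e j⟫_ℝ)^2
      = (N:ℝ) + ∑ i, ∑ j ∈ Finset.univ.erase i, (⟪e i, e j⟫_ℝ)^2 := by
  have : ∀ i : Fin N, ∑ j, (⟪e i, e j⟫_ℝ)^2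
      = 1 + ∑ j ∈ Finset.univ.erase i, (⟪e i, e j⟫_ℝ)^2 := by
    intro i
    rw [← Finset.add_sum_erase _ _ (Finset.mem_univ i), real_inner_self_eq_norm_sq,
      he i, one_pow, one_pow]
  rw [Finset.sum_congr rfl (fun i _ => this i), Finset.sum_add_distrib]
  simp

private lemma grass_le_sup {N : ℕ} (f : Fin N → Fin N → ℝ) {i j : Fin N} (hij : i < j) :
    f i j ≤ ⨆ i, ⨆ j, ⨆ (_ : i < j), f i j := by
  have h1 : f i j = ⨆ (_ : i < j), f i j := (ciSup_pos (f := fun _ => f i j) hij).symm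
  rw [h1]
  have h2 : (⨆ (_ : i < j), f i j) ≤ ⨆ j, ⨆ (_ : i < j), f i j :=
    le_ciSup (f := fun j => ⨆ (_ : i < j), f i j)
      (Set.Finite.bddAbove (Set.finite_range _)) j
  exact h2.trans (le_ciSup (f := fun i => ⨆ j, ⨆ (_ : i < j), f i j)
    (Set.Finite.bddAbove (Set.finite_range _)) i)

/-- An equiangular tight unit-norm frame is a Grassmannian frame: among all
unit-norm frames of `N` vectors in `ℝ^M` it minimizes the maximal frame
correlation. -/
theorem stmt_4 (M N : ℕ) (hM : 1 ≤ M) (hMN : M ≤ N)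
    (u : Fin N → EuclideanSpace ℝ (Fin M))
    (hunorm : ∀ i, ‖u i‖ = 1)
    (huspan : Submodule.span ℝ (Set.range u) = ⊤)
    (hequi : ∃ α : ℝ, ∀ i j : Fin N, i ≠ j → |(⟪u i, u j⟫_ℝ)| = α)
    (htight : ∃ A : ℝ, ∀ x : EuclideanSpace ℝ (Fin M),
      (∑ i : Fin N, ⟪x, u i⟫_ℝ • u i) = A • x) :
    ∀ e : Fin N → EuclideanSpace ℝ (Fin M),
      (∀ i, ‖e i‖ = 1) → Submodule.span ℝ (Set.range e) = ⊤ →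
      (⨆ i : Fin N, ⨆ j : Fin N, ⨆ (_ : i < j), |(⟪u i, u j⟫_ℝ)|) ≤
        ⨆ i : Fin N, ⨆ j : Fin N, ⨆ (_ : i < j), |(⟪e i, e j⟫_ℝ)| := by
  intro e he _
  obtain ⟨α, hα⟩ := hequi
  obtain ⟨A, hA⟩ := htight
  set β := ⨆ i : Fin N, ⨆ j : Fin N, ⨆ (_ : i < j), |(⟪e i, e j⟫_ℝ)| with hβdef
  rcases Nat.lt_or_ge N 2 with hN | hN
  · -- N = 1 : both suprema are over empty index sets
    have hRHS : 0 ≤ β :=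
      Real.iSup_nonneg fun i => Real.iSup_nonneg fun j =>
        Real.iSup_nonneg fun _ => abs_nonneg _
    refine le_trans ?_ hRHS
    refine Real.iSup_le (fun i => Real.iSup_le (fun j => Real.iSup_le ?_ le_rfl) le_rfl) le_rfl
    intro hij
    exact absurd (Fin.lt_def.mp hij) (by omega)
  · -- N ≥ 2
    have hne : (⟨0, by omega⟩ : Fin N) ≠ ⟨1, by omega⟩ := by
      simp [Fin.ext_iff]
    have hα0 : 0 ≤ α := by
      rw [← hα _ _ hne]; exact abs_nonneg _
    -- every off-diagonal correlation of e is bounded by β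
    have hβle : ∀ i j : Fin N, i ≠ j → |(⟪e i, e j⟫_ℝ)| ≤ β := by
      intro i j hij
      rcases lt_or_gt_of_ne hij with h | h
      · exact grass_le_sup (fun i j => |(⟪e i, e j⟫_ℝ)|) h
      · rw [real_inner_comm]
        exact grass_le_sup (fun i j => |(⟪e i, e j⟫_ℝ)|) h
    have hβ0 : 0 ≤ β := le_trans (abs_nonneg _) (hβle _ _ hne)
    -- off-diagonal sums
    have husum : ∑ i, ∑ j, (⟪u i, u j⟫_ℝ)^2
        = (N:ℝ) + (N:ℝ) * (((N:ℝ) - 1) * α^2) := by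
      rw [grass_split u hunorm]
      congr 1
      have : ∀ i : Fin N, ∑ j ∈ Finset.univ.erase i, (⟪u i, u j⟫_ℝ)^2
          = ((N:ℝ) - 1) * α^2 := by
        intro i
        rw [Finset.sum_congr rfl (fun j hj => by
          rw [← sq_abs, hα i j (Finset.ne_of_mem_erase hj).symm])]
        rw [Finset.sum_const, Finset.card_erase_of_mem (Finset.mem_univ i),
          Finset.card_univ, Fintype.card_fin, nsmul_eq_mul, Nat.cast_sub (by omega),
          Nat.cast_one]
      rw [Finset.sum_congr rfl (fun i _ => this i), Finset.sum_const, Finset.card_univ,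
        Fintype.card_fin, nsmul_eq_mul]
    have hesum : ∑ i, ∑ j, (⟪e i, e j⟫_ℝ)^2
        ≤ (N:ℝ) + (N:ℝ) * (((N:ℝ) - 1) * β^2) := by
      rw [grass_split e he]
      refine add_le_add_right ?_ _
      have hstep : ∀ i : Fin N, ∑ j ∈ Finset.univ.erase i, (⟪e i, e j⟫_ℝ)^2
          ≤ ((N:ℝ) - 1) * β^2 := by
        intro i
        have : ∑ j ∈ Finset.univ.erase i, (⟪e i, e j⟫_ℝ)^2
            ≤ ∑ _j ∈ Finset.univ.erase i, β^2 := by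
          refine Finset.sum_le_sum fun j hj => ?_
          rw [← sq_abs]
          exact pow_le_pow_left₀ (abs_nonneg _)
            (hβle i j (Finset.ne_of_mem_erase hj).symm) 2
        refine this.trans_eq ?_
        rw [Finset.sum_const, Finset.card_erase_of_mem (Finset.mem_univ i),
          Finset.card_univ, Fintype.card_fin, nsmul_eq_mul, Nat.cast_sub (by omega),
          Nat.cast_one]
      calc ∑ i, ∑ j ∈ Finset.univ.erase i, (⟪e i, e j⟫_ℝ)^2
          ≤ ∑ _i : Fin N, ((N:ℝ) - 1) * β^2 := Finset.sum_le_sum fun i _ => hstep i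
        _ = (N:ℝ) * (((N:ℝ) - 1) * β^2) := by
            rw [Finset.sum_const, Finset.card_univ, Fintype.card_fin, nsmul_eq_mul]
    -- combine with the Welch bound and tightness
    have hkey : (M:ℝ) * ((N:ℝ) + (N:ℝ) * (((N:ℝ) - 1) * α^2))
        ≤ (M:ℝ) * ((N:ℝ) + (N:ℝ) * (((N:ℝ) - 1) * β^2)) := by
      calc (M:ℝ) * ((N:ℝ) + (N:ℝ) * (((N:ℝ) - 1) * α^2))
          = (M:ℝ) * ∑ i, ∑ j, (⟪u i, u j⟫_ℝ)^2 := by rw [husum]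
        _ = (N:ℝ)^2 := grass_tight_total u hunorm A hA
        _ ≤ (M:ℝ) * ∑ i, ∑ j, (⟪e i, e j⟫_ℝ)^2 := grass_welch e he
        _ ≤ (M:ℝ) * ((N:ℝ) + (N:ℝ) * (((N:ℝ) - 1) * β^2)) :=
            mul_le_mul_of_nonneg_left hesum (Nat.cast_nonneg M)
    have hM0 : (0:ℝ) < (M:ℝ) := by exact_mod_cast hM
    have h2 : (N:ℝ) + (N:ℝ) * (((N:ℝ) - 1) * α^2)
        ≤ (N:ℝ) + (N:ℝ) * (((N:ℝ) - 1) * β^2) :=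
      le_of_mul_le_mul_left hkey hM0
    have hN2 : (2:ℝ) ≤ (N:ℝ) := by exact_mod_cast hN
    have hsq : α^2 ≤ β^2 := by
      have h3 : (N:ℝ)*((N:ℝ)-1)*α^2 ≤ (N:ℝ)*((N:ℝ)-1)*β^2 := by ring_nf at h2 ⊢; linarith
      have hpos : (0:ℝ) < (N:ℝ)*((N:ℝ)-1) := by nlinarith
      exact le_of_mul_le_mul_left (by linarith [h3]) hpos
    have hαβ : α ≤ β := by
      calc α = Real.sqrt (α^2) := (Real.sqrt_sq hα0).symm
        _ ≤ Real.sqrt (β^2) := Real.sqrt_le_sqrt hsq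
        _ = β := Real.sqrt_sq hβ0
    refine le_trans ?_ hαβ
    exact Real.iSup_le (fun i => Real.iSup_le (fun j =>
      Real.iSup_le (fun h => (hα i j h.ne).le) hα0) hα0) hα0
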